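/- (TMHP length.) Let 0 < v < 1, let s = (x_s, y_s) and f = (x_f, y_f) be points in ℝ², and let Q = {q₁, …, qₙ} be a finite set of points in ℝ². For p = (X,Y), q = (x,y) ∈ ℝ² define T_v(p,q) := (√((1−v²)(X−x)² + (Y−y)²) − v(Y−y))/(1−v²), and define TMHP_v(s,Q,f) as the minimum, over all orderings q_{σ(1)}, …, q_{σ(n)} of the elements of Q, of T_v(s, q_{σ(1)}) + Σ_{i=1}^{n−1} T_v(q_{σ(i)}, q_{σ(i+1)}) + T_v(q_{σ(n)}, f). Define g : ℝ² → ℝ² by g(x,y) = (x/√(1−v²), y/(1−v²)). Then TMHP_v(s,Q,f) = EMHP(g(s), g(Q), g(f)) + v(y_f − y_s)/(1−v²), where g(Q) denotes the image of Q under g. -/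

import Mathlib

/-- The minimum interception time for a unit-speed vehicle at `p = (X,Y)`
to catch a target starting at `q = (x,y)` moving with velocity `(0,v)`. -/
noncomputable def Tv (v : ℝ) (p q : ℝ × ℝ) : ℝ :=
  (Real.sqrt ((1 - v ^ 2) * (p.1 - q.1) ^ 2 + (p.2 - q.2) ^ 2) - v * (p.2 - q.2)) / (1 - v ^ 2)

/-- The coordinate transformation `g(x,y) = (x/√(1−v²), y/(1−v²))`, valued in
the Euclidean plane. -/
noncomputable def gmap (v : ℝ) (p : ℝ × ℝ) : EuclideanSpace ℝ (Fin 2) :=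
  (WithLp.equiv 2 (Fin 2 → ℝ)).symm ![p.1 / Real.sqrt (1 - v ^ 2), p.2 / (1 - v ^ 2)]

/-- Total interception time along a list of initial target positions,
visited in order. -/
noncomputable def TPath (v : ℝ) : List (ℝ × ℝ) → ℝ
  | [] => 0
  | [_] => 0
  | p :: q :: rest => Tv v p q + TPath v (q :: rest)

/-- `TMHP v s Q f`: the minimum, over all orderings of the finite set `Q`, of
the total interception time starting at `s`, visiting every target of `Q`
exactly once, and finishing at the (translating) point `f`. -/
noncomputable def TMHP (v : ℝ) (s : ℝ × ℝ) (Q : Finset (ℝ × ℝ)) (f : ℝ × ℝ) : ℝ :=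
  sInf {c : ℝ | ∃ l : List (ℝ × ℝ), l.Nodup ∧ (∀ x, x ∈ l ↔ x ∈ Q) ∧
    c = TPath v (s :: (l ++ [f]))}

/-- Euclidean length of a polygonal path through a list of points. -/
noncomputable def pathLength : List (EuclideanSpace ℝ (Fin 2)) → ℝ
  | [] => 0
  | [_] => 0
  | p :: q :: rest => ‖q - p‖ + pathLength (q :: rest)

/-- `EMHP s Q f`: the minimum, over all orderings of the finite set `Q`, of the
Euclidean length of the path starting at `s`, visiting every point of `Q`
exactly once, and terminating at `f`. -/
noncomputable def EMHP (s : EuclideanSpace ℝ (Fin 2)) (Q : Finset (EuclideanSpace ℝ (Fin 2)))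
    (f : EuclideanSpace ℝ (Fin 2)) : ℝ :=
  sInf {c : ℝ | ∃ l : List (EuclideanSpace ℝ (Fin 2)), l.Nodup ∧ (∀ x, x ∈ l ↔ x ∈ Q) ∧
    c = pathLength (s :: (l ++ [f]))}

noncomputable instance : DecidableEq (EuclideanSpace ℝ (Fin 2)) := Classical.decEq _

/-! ### Auxiliary lemmas -/

/-- The inverse of `gmap`. -/
noncomputable def hmap (v : ℝ) (x : EuclideanSpace ℝ (Fin 2)) : ℝ × ℝ :=
  (x 0 * Real.sqrt (1 - v ^ 2), x 1 * (1 - v ^ 2))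

lemma gmap_apply0 (v : ℝ) (p : ℝ × ℝ) : gmap v p 0 = p.1 / Real.sqrt (1 - v ^ 2) := rfl
lemma gmap_apply1 (v : ℝ) (p : ℝ × ℝ) : gmap v p 1 = p.2 / (1 - v ^ 2) := rfl

lemma hmap_gmap (v : ℝ) (hv0 : 0 < v) (hv1 : v < 1) (p : ℝ × ℝ) : hmap v (gmap v p) = p := by
  have hc : (0:ℝ) < 1 - v ^ 2 := by nlinarith
  have hs : Real.sqrt (1 - v ^ 2) ≠ 0 := by positivity
  simp only [hmap, gmap_apply0, gmap_apply1]
  rw [div_mul_cancel₀ _ hs, div_mul_cancel₀ _ hc.ne']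

lemma gmap_hmap (v : ℝ) (hv0 : 0 < v) (hv1 : v < 1) (x : EuclideanSpace ℝ (Fin 2)) :
    gmap v (hmap v x) = x := by
  have hc : (0:ℝ) < 1 - v ^ 2 := by nlinarith
  have hs : Real.sqrt (1 - v ^ 2) ≠ 0 := by positivity
  ext i
  fin_cases i
  · show (gmap v (hmap v x)) 0 = x 0
    rw [gmap_apply0]
    show x 0 * Real.sqrt (1 - v ^ 2) / Real.sqrt (1 - v ^ 2) = x 0
    rw [mul_div_cancel_right₀ _ hs]
  · show (gmap v (hmap v x)) 1 = x 1
    rw [gmap_apply1]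
    show x 1 * (1 - v ^ 2) / (1 - v ^ 2) = x 1
    rw [mul_div_cancel_right₀ _ hc.ne']

lemma gmap_injective (v : ℝ) (hv0 : 0 < v) (hv1 : v < 1) : Function.Injective (gmap v) :=
  Function.LeftInverse.injective (hmap_gmap v hv0 hv1)

lemma hmap_injective (v : ℝ) (hv0 : 0 < v) (hv1 : v < 1) : Function.Injective (hmap v) :=
  Function.LeftInverse.injective (gmap_hmap v hv0 hv1)

lemma Tv_eq (v : ℝ) (hv0 : 0 < v) (hv1 : v < 1) (p q : ℝ × ℝ) :
    Tv v p q = ‖gmap v q - gmap v p‖ + v * (q.2 - p.2) / (1 - v ^ 2) := by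
  have hc : (0:ℝ) < 1 - v ^ 2 := by nlinarith
  have hs : Real.sqrt (1 - v ^ 2) ≠ 0 := by positivity
  have hnorm : ‖gmap v q - gmap v p‖
      = Real.sqrt ((1 - v ^ 2) * (p.1 - q.1) ^ 2 + (p.2 - q.2) ^ 2) / (1 - v ^ 2) := by
    rw [EuclideanSpace.norm_eq]
    rw [show (fun i => ‖(gmap v q - gmap v p) i‖ ^ 2)
        = fun i => ‖gmap v q i - gmap v p i‖ ^ 2 from rfl]
    rw [Fin.sum_univ_two, gmap_apply0, gmap_apply0, gmap_apply1, gmap_apply1]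
    rw [div_sub_div_same, div_sub_div_same, Real.norm_eq_abs, Real.norm_eq_abs,
      sq_abs, sq_abs, div_pow, div_pow, Real.sq_sqrt hc.le]
    rw [eq_div_iff hc.ne', ← Real.sqrt_sq hc.le, ← Real.sqrt_mul (by positivity)]
    congr 1
    simp only [Real.sqrt_sq hc.le]
    field_simp
    ring
  rw [Tv, hnorm, sub_div]
  ring

lemma Tv_nonneg (v : ℝ) (hv0 : 0 < v) (hv1 : v < 1) (p q : ℝ × ℝ) : 0 ≤ Tv v p q := by
  have hc : (0:ℝ) < 1 - v ^ 2 := by nlinarith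
  apply div_nonneg _ hc.le
  have h1 : v * (p.2 - q.2) ≤ |p.2 - q.2| := by
    calc v * (p.2 - q.2) ≤ |v * (p.2 - q.2)| := le_abs_self _
    _ = v * |p.2 - q.2| := by rw [abs_mul, abs_of_pos hv0]
    _ ≤ 1 * |p.2 - q.2| := by nlinarith [abs_nonneg (p.2 - q.2)]
    _ = |p.2 - q.2| := one_mul _
  have h2 : |p.2 - q.2| ≤ Real.sqrt ((1 - v ^ 2) * (p.1 - q.1) ^ 2 + (p.2 - q.2) ^ 2) := by
    rw [← Real.sqrt_sq_eq_abs]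
    exact Real.sqrt_le_sqrt (by nlinarith [sq_nonneg (p.1 - q.1)])
  linarith

lemma TPath_nonneg (v : ℝ) (hv0 : 0 < v) (hv1 : v < 1) : ∀ l : List (ℝ × ℝ), 0 ≤ TPath v l
  | [] => le_refl 0
  | [_] => le_refl 0
  | p :: q :: rest => by
    have := TPath_nonneg v hv0 hv1 (q :: rest)
    have := Tv_nonneg v hv0 hv1 p q
    show 0 ≤ Tv v p q + TPath v (q :: rest)
    linarith

lemma pathLength_nonneg : ∀ l : List (EuclideanSpace ℝ (Fin 2)), 0 ≤ pathLength l
  | [] => le_refl 0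
  | [_] => le_refl 0
  | p :: q :: rest => by
    have := pathLength_nonneg (q :: rest)
    have := norm_nonneg (q - p)
    show 0 ≤ ‖q - p‖ + pathLength (q :: rest)
    linarith

lemma TPath_telescope (v : ℝ) (hv0 : 0 < v) (hv1 : v < 1) :
    ∀ (l : List (ℝ × ℝ)) (a b : ℝ × ℝ),
    TPath v (a :: (l ++ [b]))
      = pathLength ((a :: (l ++ [b])).map (gmap v)) + v * (b.2 - a.2) / (1 - v ^ 2)
  | [], a, b => by
    show Tv v a b + TPath v [b] = ‖gmap v b - gmap v a‖ + pathLength [gmap v b] + _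
    show Tv v a b + 0 = ‖gmap v b - gmap v a‖ + 0 + _
    rw [Tv_eq v hv0 hv1]
    ring
  | c :: t, a, b => by
    have ih := TPath_telescope v hv0 hv1 t c b
    show Tv v a c + TPath v (c :: (t ++ [b]))
      = ‖gmap v c - gmap v a‖ + pathLength ((c :: (t ++ [b])).map (gmap v)) + _
    rw [ih, Tv_eq v hv0 hv1]
    ring

/-- TMHP length:
`TMHP_v(s,Q,f) = EMHP(g(s), g(Q), g(f)) + v(y_f − y_s)/(1 − v²)`. -/
theorem stmt3 (v : ℝ) (hv0 : 0 < v) (hv1 : v < 1) (s f : ℝ × ℝ) (Q : Finset (ℝ × ℝ)) :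
    TMHP v s Q f
      = EMHP (gmap v s) (Q.image (gmap v)) (gmap v f) + v * (f.2 - s.2) / (1 - v ^ 2) := by
  have hc : (0:ℝ) < 1 - v ^ 2 := by nlinarith
  set K : ℝ := v * (f.2 - s.2) / (1 - v ^ 2) with hKdef
  set A : Set ℝ := {c : ℝ | ∃ l : List (ℝ × ℝ), l.Nodup ∧ (∀ x, x ∈ l ↔ x ∈ Q) ∧
    c = TPath v (s :: (l ++ [f]))} with hA
  set B : Set ℝ := {c : ℝ | ∃ l : List (EuclideanSpace ℝ (Fin 2)), l.Nodup ∧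
    (∀ x, x ∈ l ↔ x ∈ Q.image (gmap v)) ∧
    c = pathLength (gmap v s :: (l ++ [gmap v f]))} with hB
  have ginj := gmap_injective v hv0 hv1
  -- forward correspondence
  have hAB : ∀ c ∈ A, ∃ b ∈ B, c = b + K := by
    rintro c ⟨l, hnd, hmem, rfl⟩
    refine ⟨pathLength (gmap v s :: (l.map (gmap v) ++ [gmap v f])), ⟨l.map (gmap v),
      hnd.map ginj, ?_, rfl⟩, ?_⟩
    · intro x
      simp only [List.mem_map, Finset.mem_image]
      constructor
      · rintro ⟨a, ha, rfl⟩; exact ⟨a, (hmem a).mp ha, rfl⟩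
      · rintro ⟨a, ha, rfl⟩; exact ⟨a, (hmem a).mpr ha, rfl⟩
    · rw [TPath_telescope v hv0 hv1]
      simp [List.map_append]
      rfl
  -- backward correspondence
  have hBA : ∀ b ∈ B, b + K ∈ A := by
    rintro b ⟨l, hnd, hmem, rfl⟩
    have hgh : (gmap v) ∘ (hmap v) = id := funext (gmap_hmap v hv0 hv1)
    have hmapgh : (l.map (hmap v)).map (gmap v) = l := by
      rw [List.map_map, hgh, List.map_id]
    refine ⟨l.map (hmap v), hnd.map (hmap_injective v hv0 hv1), ?_, ?_⟩
    · intro x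
      have hx : x ∈ l.map (hmap v) ↔ gmap v x ∈ l := by
        constructor
        · rintro h
          obtain ⟨y, hy, rfl⟩ := List.mem_map.mp h
          rwa [gmap_hmap v hv0 hv1]
        · intro h
          exact List.mem_map.mpr ⟨gmap v x, h, hmap_gmap v hv0 hv1 x⟩
      rw [hx, hmem]
      simp only [Finset.mem_image]
      constructor
      · rintro ⟨a, ha, hax⟩; rwa [← ginj hax]
      · intro h; exact ⟨x, h, rfl⟩
    · rw [TPath_telescope v hv0 hv1]
      rw [show (s :: (l.map (hmap v) ++ [f])).map (gmap v)
          = gmap v s :: ((l.map (hmap v)).map (gmap v) ++ [gmap v f]) by simp, hmapgh]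
  -- nonemptiness and boundedness
  have hAne : A.Nonempty := by
    refine ⟨TPath v (s :: (Q.toList ++ [f])), Q.toList, Q.nodup_toList,
      fun x => Finset.mem_toList, rfl⟩
  have hBne : B.Nonempty := by
    obtain ⟨c, hcA⟩ := hAne
    obtain ⟨b, hb, _⟩ := hAB c hcA
    exact ⟨b, hb⟩
  have hAbdd : BddBelow A := by
    refine ⟨0, fun c hcA => ?_⟩
    obtain ⟨l, _, _, rfl⟩ := hcA
    exact TPath_nonneg v hv0 hv1 _
  have hBbdd : BddBelow B := by
    refine ⟨0, fun c hcB => ?_⟩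
    obtain ⟨l, _, _, rfl⟩ := hcB
    exact pathLength_nonneg _
  -- conclude
  have hTMHP : TMHP v s Q f = sInf A := rfl
  have hEMHP : EMHP (gmap v s) (Q.image (gmap v)) (gmap v f) = sInf B := rfl
  rw [hTMHP, hEMHP]
  apply le_antisymm
  · have h1 : sInf A - K ≤ sInf B := by
      apply le_csInf hBne
      intro b hb
      have := csInf_le hAbdd (hBA b hb)
      linarith
    linarith
  · apply le_csInf hAne
    intro c hcA
    obtain ⟨b, hb, rfl⟩ := hAB c hcA
    have := csInf_le hBbdd hb
    linarith
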